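/- Let G be a graph with length-function ℓ and let C ⊆ G be a cycle. Then C is ℓ-geodesic if and only if there do not exist cycles D₁, D₂ of G with ℓ(D₁) < ℓ(C) and ℓ(D₂) < ℓ(C) such that C is the 𝔽₂-sum of D₁ and D₂ (i.e., the edge set of C is the symmetric difference of the edge sets of D₁ and D₂). -/

import Mathlib

open SimpleGraph

/-- The `ℓ`-length of a walk: the sum of the lengths of its edges. -/
def walkLen {V : Type u} {G : SimpleGraph V} (ℓ : Sym2 V → ℝ) {a b : V} (p : G.Walk a b) : ℝ :=
  (p.edges.map ℓ).sum

/-- A closed walk `c` is `ℓ`-geodesic: between any two of its vertices it contains a path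
whose `ℓ`-length is minimum among all paths of `G` between those vertices. -/
def IsGeodesic {V : Type u} {G : SimpleGraph V} (ℓ : Sym2 V → ℝ) {v : V} (c : G.Walk v v) :
    Prop :=
  ∀ a ∈ c.support, ∀ b ∈ c.support,
    ∃ p : G.Walk a b, p.IsPath ∧ (∀ e ∈ p.edges, e ∈ c.edges) ∧
      ∀ q : G.Walk a b, q.IsPath → walkLen ℓ p ≤ walkLen ℓ q

namespace GeoAux

open SimpleGraph.Walk

variable {V : Type} {G : SimpleGraph V} {ℓ : Sym2 V → ℝ}

theorem walkLen_append {a b d : V} (ℓ : Sym2 V → ℝ) (p : G.Walk a b) (q : G.Walk b d) :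
    walkLen ℓ (p.append q) = walkLen ℓ p + walkLen ℓ q := by
  simp [walkLen, Walk.edges_append]

theorem walkLen_reverse {a b : V} (ℓ : Sym2 V → ℝ) (p : G.Walk a b) :
    walkLen ℓ p.reverse = walkLen ℓ p := by
  simp [walkLen, Walk.edges_reverse, List.sum_reverse]

theorem walkLen_cons {a b d : V} (ℓ : Sym2 V → ℝ) (h : G.Adj a b) (p : G.Walk b d) :
    walkLen ℓ (Walk.cons h p) = ℓ (s(a, b)) + walkLen ℓ p := by
  simp [walkLen]

theorem walkLen_nil {a : V} (ℓ : Sym2 V → ℝ) :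
    walkLen ℓ (Walk.nil : G.Walk a a) = 0 := by
  simp [walkLen]

theorem walkLen_nonneg (hℓpos : ∀ e ∈ G.edgeSet, 0 < ℓ e) {a b : V} (p : G.Walk a b) :
    0 ≤ walkLen ℓ p := by
  apply List.sum_nonneg
  intro x hx
  rcases List.mem_map.mp hx with ⟨e, he, rfl⟩
  exact (hℓpos e (p.edges_subset_edgeSet he)).le

theorem le_walkLen_of_mem (hℓpos : ∀ e ∈ G.edgeSet, 0 < ℓ e) {a b : V} (p : G.Walk a b)
    {e : Sym2 V} (he : e ∈ p.edges) : ℓ e ≤ walkLen ℓ p := by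
  apply List.single_le_sum (l := p.edges.map ℓ)
  · intro x hx
    rcases List.mem_map.mp hx with ⟨f, hf, rfl⟩
    exact (hℓpos f (p.edges_subset_edgeSet hf)).le
  · exact List.mem_map_of_mem he

/-- Sum of `ℓ` over a finite edge set. -/
noncomputable def fsum (ℓ : Sym2 V → ℝ) (F : Finset (Sym2 V)) : ℝ := ∑ e ∈ F, ℓ e

theorem walkLen_eq_fsum [DecidableEq V] {a b : V} (ℓ : Sym2 V → ℝ) (p : G.Walk a b)
    (hp : p.edges.Nodup) : walkLen ℓ p = fsum ℓ p.edges.toFinset := by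
  rw [walkLen, fsum, List.sum_toFinset _ hp]

theorem fsum_nonneg {F : Finset (Sym2 V)} (h : ∀ e ∈ F, 0 ≤ ℓ e) : 0 ≤ fsum ℓ F :=
  Finset.sum_nonneg h

theorem fsum_mono {F₁ F₂ : Finset (Sym2 V)} (hsub : F₁ ⊆ F₂) (h : ∀ e ∈ F₂, 0 ≤ ℓ e) :
    fsum ℓ F₁ ≤ fsum ℓ F₂ :=
  Finset.sum_le_sum_of_subset_of_nonneg hsub (fun e he _ => h e he)

theorem fsum_union_le {F₁ F₂ : Finset (Sym2 V)} [DecidableEq (Sym2 V)]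
    (h : ∀ e ∈ F₁ ∪ F₂, 0 ≤ ℓ e) : fsum ℓ (F₁ ∪ F₂) ≤ fsum ℓ F₁ + fsum ℓ F₂ := by
  rw [fsum, fsum, fsum, ← Finset.sum_union_inter]
  have : 0 ≤ ∑ e ∈ F₁ ∩ F₂, ℓ e :=
    Finset.sum_nonneg (fun e he => h e (Finset.mem_union_left _ (Finset.mem_inter.mp he).1))
  linarith

theorem fsum_disjUnion {F₁ F₂ : Finset (Sym2 V)} [DecidableEq (Sym2 V)]
    (h : Disjoint F₁ F₂) : fsum ℓ (F₁ ∪ F₂) = fsum ℓ F₁ + fsum ℓ F₂ := by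
  rw [fsum, fsum, fsum, Finset.sum_union h]


/-- mod-2 degree of a vertex w.r.t. a finite edge set -/
noncomputable def degZ [DecidableEq V] (F : Finset (Sym2 V)) (x : V) : ZMod 2 :=
  ((F.filter (fun e => x ∈ e)).card : ZMod 2)

variable [DecidableEq V]
set_option linter.unusedSectionVars false

theorem degZ_empty (x : V) : degZ (∅ : Finset (Sym2 V)) x = 0 := by simp [degZ]

theorem degZ_union_disjoint {A B : Finset (Sym2 V)} (h : Disjoint A B) (x : V) :
    degZ (A ∪ B) x = degZ A x + degZ B x := by
  rw [degZ, degZ, degZ, Finset.filter_union,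
    Finset.card_union_of_disjoint (Finset.disjoint_filter_filter h), Nat.cast_add]

theorem card_symmDiff_Z (A B : Finset (Sym2 V)) :
    ((symmDiff A B).card : ZMod 2) = A.card + B.card := by
  have h1 : symmDiff A B = (A ∪ B) \ (A ∩ B) := by
    ext e
    simp only [Finset.mem_union, Finset.mem_sdiff, Finset.mem_inter, Finset.mem_symmDiff]
    tauto
  have h2 : (A ∩ B) ⊆ (A ∪ B) := Finset.inter_subset_union
  have h3 : ((A ∪ B) \ (A ∩ B)).card = (A ∪ B).card - (A ∩ B).card := Finset.card_sdiff_of_subset h2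
  have h4 : (A ∩ B).card ≤ (A ∪ B).card := Finset.card_le_card h2
  have h5 := Finset.card_union_add_card_inter A B
  have hcard : (symmDiff A B).card + ((A ∩ B).card + (A ∩ B).card) = A.card + B.card := by
    rw [h1, h3]; omega
  have := congrArg (Nat.cast : ℕ → ZMod 2) hcard
  push_cast at this
  rwa [CharTwo.add_self_eq_zero, add_zero] at this

theorem degZ_symmDiff (A B : Finset (Sym2 V)) (x : V) :
    degZ (symmDiff A B) x = degZ A x + degZ B x := by
  have key : (symmDiff A B).filter (fun e => x ∈ e) =
      symmDiff (A.filter (fun e => x ∈ e)) (B.filter (fun e => x ∈ e)) := by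
    ext e
    simp only [Finset.mem_filter, Finset.mem_symmDiff]
    tauto
  rw [degZ, degZ, degZ, key, card_symmDiff_Z]

theorem degZ_singleton (e : Sym2 V) (x : V) :
    degZ ({e} : Finset (Sym2 V)) x = if x ∈ e then 1 else 0 := by
  by_cases h : x ∈ e <;> simp [degZ, Finset.filter_singleton, h]

theorem vert_mem_support_of_mem_edges {a b : V} {p : G.Walk a b} {e : Sym2 V} {x : V}
    (he : e ∈ p.edges) (hx : x ∈ e) : x ∈ p.support := by
  induction e with
  | h y z =>
    rcases Sym2.mem_iff.mp hx with rfl | rfl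
    · exact p.fst_mem_support_of_mem_edges he
    · exact p.snd_mem_support_of_mem_edges he

/-- mod 2 degrees of the edge set of a path: 1 exactly at the (distinct) endpoints. -/
theorem degZ_path {a b : V} (p : G.Walk a b) (hp : p.IsPath) (x : V) :
    degZ p.edges.toFinset x = (if x = a then 1 else 0) + (if x = b then 1 else 0) := by
  induction p with
  | nil =>
    rename_i u
    simp only [Walk.edges_nil, List.toFinset_nil, degZ_empty]
    by_cases h : x = u
    · simp [h]; decide
    · simp [h]
  | @cons u u' w h p ih =>
    have hp' : p.IsPath := hp.of_cons
    have hnot : s(u, u') ∉ p.edges := by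
      intro hmem
      exact ((Walk.cons_isPath_iff h p).mp hp).2 (p.fst_mem_support_of_mem_edges hmem)
    have hne : u ≠ u' := G.ne_of_adj h
    have hub : u ≠ w := by
      intro hq
      subst hq
      exact ((Walk.cons_isPath_iff h p).mp hp).2 p.end_mem_support
    have hins : (Walk.cons h p).edges.toFinset = symmDiff ({s(u,u')} : Finset (Sym2 V)) p.edges.toFinset := by
      rw [Walk.edges_cons, List.toFinset_cons]
      ext e
      simp only [Finset.mem_insert, Finset.mem_symmDiff, Finset.mem_singleton, List.mem_toFinset]
      constructor
      · rintro (rfl | he)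
        · left; exact ⟨rfl, fun hh => hnot hh⟩
        · right
          refine ⟨he, fun hh => hnot (hh ▸ he)⟩
      · rintro (⟨rfl, -⟩ | ⟨he, -⟩)
        · left; rfl
        · right; exact he
    rw [hins, degZ_symmDiff, degZ_singleton, ih hp']
    have hmem : (x ∈ s(u, u')) ↔ (x = u ∨ x = u') := Sym2.mem_iff
    by_cases h1 : x = u <;> by_cases h2 : x = u' <;> by_cases h3 : x = w <;>
      simp_all <;> decide



theorem toFinset_cons_symmDiff {e : Sym2 V} {l : List (Sym2 V)} (h : e ∉ l) :
    (e :: l).toFinset = symmDiff ({e} : Finset (Sym2 V)) l.toFinset := by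
  ext f
  simp only [List.toFinset_cons, Finset.mem_insert, Finset.mem_symmDiff, Finset.mem_singleton,
    List.mem_toFinset]
  constructor
  · rintro (rfl | hf)
    · left; exact ⟨rfl, h⟩
    · right; exact ⟨hf, fun hh => h (hh ▸ hf)⟩
  · rintro (⟨rfl, -⟩ | ⟨hf, -⟩)
    · left; rfl
    · right; exact hf

/-- In a path, an edge set all of whose degrees away from the far endpoint are even is empty. -/
theorem path_parity_empty {a b : V} (p : G.Walk a b) (hp : p.IsPath)
    (F : Finset (Sym2 V)) (hF : F ⊆ p.edges.toFinset)
    (hdeg : ∀ x, x ≠ b → degZ F x = 0) : F = ∅ := by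
  induction p with
  | nil => simpa using Finset.subset_empty.mp (by simpa using hF)
  | @cons u u' w h p ih =>
    have hp' : p.IsPath := hp.of_cons
    have hu : u ∉ p.support := ((Walk.cons_isPath_iff h p).mp hp).2
    have hub : u ≠ w := fun hq => hu (hq ▸ p.end_mem_support)
    have hfil : F.filter (fun e => u ∈ e) ⊆ {s(u, u')} := by
      intro f hf
      rcases Finset.mem_filter.mp hf with ⟨hfF, hfu⟩
      have := hF hfF
      rw [Walk.edges_cons, List.toFinset_cons, Finset.mem_insert] at this
      rcases this with rfl | hfp
      · exact Finset.mem_singleton_self _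
      · exact absurd (vert_mem_support_of_mem_edges (List.mem_toFinset.mp hfp) hfu) hu
    have hcard : (F.filter (fun e => u ∈ e)).card = 0 := by
      have h1 : (F.filter (fun e => u ∈ e)).card ≤ 1 := by
        simpa using Finset.card_le_card hfil
      have h2 : ((F.filter (fun e => u ∈ e)).card : ZMod 2) = 0 := hdeg u hub
      rw [ZMod.natCast_eq_zero_iff] at h2
      omega
    have he₀ : s(u, u') ∉ F := by
      intro hmem
      have : s(u, u') ∈ F.filter (fun e => u ∈ e) :=
        Finset.mem_filter.mpr ⟨hmem, by simp⟩
      simp [Finset.card_eq_zero.mp hcard] at this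
    have hF' : F ⊆ p.edges.toFinset := by
      intro f hf
      have := hF hf
      rw [Walk.edges_cons, List.toFinset_cons, Finset.mem_insert] at this
      rcases this with rfl | hfp
      · exact absurd hf he₀
      · exact hfp
    exact ih hp' hF' hdeg

/-- Parity classification: an even edge subset of a cycle is empty or everything. -/
theorem cycle_parity {v : V} {c : G.Walk v v} (hc : c.IsCycle)
    (F : Finset (Sym2 V)) (hF : F ⊆ c.edges.toFinset)
    (hdeg : ∀ x, degZ F x = 0) : F = ∅ ∨ F = c.edges.toFinset := by
  cases c with
  | nil => exact absurd rfl hc.ne_nil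
  | @cons _ u' _ h rest =>
    have hrest : rest.IsPath := by
      rw [Walk.isPath_def]
      simpa using hc.support_nodup
    have hne : v ≠ u' := G.ne_of_adj h
    have he₀rest : s(v, u') ∉ rest.edges := by
      have := hc.isTrail.edges_nodup
      rw [Walk.edges_cons] at this
      exact (List.nodup_cons.mp this).1
    have hEC : (Walk.cons h rest).edges.toFinset
        = symmDiff ({s(v, u')} : Finset (Sym2 V)) rest.edges.toFinset := by
      rw [Walk.edges_cons]
      exact toFinset_cons_symmDiff he₀rest
    have hECdeg : ∀ x, degZ (Walk.cons h rest).edges.toFinset x = 0 := by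
      intro x
      rw [hEC, degZ_symmDiff, degZ_singleton, degZ_path rest hrest]
      by_cases h1 : x = v <;> by_cases h2 : x = u' <;> simp_all [Sym2.mem_iff] <;> decide
    by_cases he₀ : s(v, u') ∈ F
    · right
      set EC := (Walk.cons h rest).edges.toFinset with hECdef
      have hsplit : F ∪ (EC \ F) = EC := Finset.union_sdiff_of_subset hF
      have hdisj : Disjoint F (EC \ F) := Finset.disjoint_sdiff
      have hdeg' : ∀ x, degZ (EC \ F) x = 0 := by
        intro x
        have := degZ_union_disjoint hdisj x
        rw [hsplit, hECdeg x, hdeg x, zero_add] at this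
        exact this.symm
      have hsub2 : EC \ F ⊆ rest.edges.toFinset := by
        intro f hf
        rcases Finset.mem_sdiff.mp hf with ⟨hfEC, hfF⟩
        rw [hECdef, Walk.edges_cons, List.toFinset_cons, Finset.mem_insert] at hfEC
        rcases hfEC with rfl | hfp
        · exact absurd he₀ hfF
        · exact hfp
      have : EC \ F = ∅ := path_parity_empty rest hrest _ hsub2 (fun x _ => hdeg' x)
      have h2 := Finset.sdiff_eq_empty_iff_subset.mp this
      exact Finset.Subset.antisymm hF h2
    · left
      have hF' : F ⊆ rest.edges.toFinset := by
        intro f hf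
        have := hF hf
        rw [Walk.edges_cons, List.toFinset_cons, Finset.mem_insert] at this
        rcases this with rfl | hfp
        · exact absurd hf he₀
        · exact hfp
      exact path_parity_empty rest hrest F hF' (fun x _ => hdeg x)


theorem end_mem_support_tail {u w : V} (p : G.Walk u w) (h : ¬p.Nil) : w ∈ p.support.tail := by
  cases p with
  | nil => simp at h
  | cons h q => simpa using q.end_mem_support

theorem mem_support_rotate {v a x : V} {c : G.Walk v v} (hn : ¬c.Nil) (ha : a ∈ c.support)
    (hx : x ∈ c.support) : x ∈ (c.rotate a ha).support := by
  have hrot := c.support_rotate a ha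
  have htail : x ∈ c.support.tail := by
    rw [c.support_eq_cons] at hx
    rcases List.mem_cons.mp hx with rfl | h
    · exact end_mem_support_tail c hn
    · exact h
  have : x ∈ (c.rotate a ha).support.tail := hrot.mem_iff.mpr htail
  rw [(c.rotate a ha).support_eq_cons]
  exact List.mem_cons_of_mem _ this

theorem mem_support_of_rotate {v a x : V} {c : G.Walk v v} (ha : a ∈ c.support)
    (hx : x ∈ (c.rotate a ha).support) : x ∈ c.support := by
  rw [(c.rotate a ha).support_eq_cons] at hx
  rcases List.mem_cons.mp hx with rfl | h
  · exact ha
  · have := (c.support_rotate a ha).mem_iff.mp h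
    rw [c.support_eq_cons]
    exact List.mem_cons_of_mem _ this

theorem toFinset_eq_of_perm {l₁ l₂ : List (Sym2 V)} (h : l₁.Perm l₂) :
    l₁.toFinset = l₂.toFinset := by
  ext e; simp [h.mem_iff]

/-- Arc decomposition of a cycle at two distinct vertices. -/
theorem arcs_exist {v a b : V} {c : G.Walk v v} (hc : c.IsCycle)
    (ha : a ∈ c.support) (hb : b ∈ c.support) (hab : a ≠ b) (ℓ : Sym2 V → ℝ) :
    ∃ (A₁ : G.Walk a b) (A₂ : G.Walk b a),
      A₁.IsPath ∧ A₂.IsPath ∧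
      (∀ e, e ∈ c.edges ↔ (e ∈ A₁.edges ∨ e ∈ A₂.edges)) ∧
      (∀ e, e ∈ A₁.edges → e ∉ A₂.edges) ∧
      walkLen ℓ c = walkLen ℓ A₁ + walkLen ℓ A₂ ∧
      (∀ x, x ∈ A₁.support → x ∈ c.support) ∧
      (∀ x, x ∈ A₂.support → x ∈ c.support) := by
  classical
  have hnil : ¬c.Nil := fun h => hc.ne_nil (Walk.nil_iff_eq_nil.mp h)
  set c' := c.rotate a ha with hc'def
  have hc' : c'.IsCycle := hc.rotate ha
  have hb' : b ∈ c'.support := mem_support_rotate hnil ha hb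
  set A₁ := c'.takeUntil b hb' with hA₁def
  set A₂ := c'.dropUntil b hb' with hA₂def
  have hspec : A₁.append A₂ = c' := c'.take_spec hb'
  have hedges : c'.edges = A₁.edges ++ A₂.edges := by
    rw [← Walk.edges_append, hspec]
  have hperm : c'.edges.Perm c.edges := (c.rotate_edges a ha).perm
  have hnodup : c'.edges.Nodup := hc'.isTrail.edges_nodup
  have hnodup2 : (A₁.edges ++ A₂.edges).Nodup := hedges ▸ hnodup
  have hdisj : ∀ e, e ∈ A₁.edges → e ∉ A₂.edges := by
    intro e h1 h2
    exact (List.nodup_append'.mp hnodup2).2.2 h1 h2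
  have hsupp : c'.support = A₁.support ++ A₂.support.tail := by
    rw [← Walk.support_append, hspec]
  have hA₁cons : A₁.support = a :: A₁.support.tail := A₁.support_eq_cons
  have htail : c'.support.tail = A₁.support.tail ++ A₂.support.tail := by
    rw [hsupp, hA₁cons]; rfl
  have htnodup : (A₁.support.tail ++ A₂.support.tail).Nodup := htail ▸ hc'.support_nodup
  have hA₂nil : ¬A₂.Nil := not_nil_of_ne (Ne.symm hab)
  have hA₁nil : ¬A₁.Nil := not_nil_of_ne hab
  have haA₂ : a ∈ A₂.support.tail := end_mem_support_tail A₂ hA₂nil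
  have hbA₁ : b ∈ A₁.support.tail := end_mem_support_tail A₁ hA₁nil
  have hdisjsupp := (List.nodup_append'.mp htnodup).2.2
  have hA₁path : A₁.IsPath := by
    rw [Walk.isPath_def, hA₁cons, List.nodup_cons]
    exact ⟨fun h => hdisjsupp h haA₂, (List.nodup_append'.mp htnodup).1⟩
  have hA₂path : A₂.IsPath := by
    rw [Walk.isPath_def, A₂.support_eq_cons, List.nodup_cons]
    exact ⟨fun h => hdisjsupp hbA₁ h, (List.nodup_append'.mp htnodup).2.1⟩
  have hlen : walkLen ℓ c = walkLen ℓ A₁ + walkLen ℓ A₂ := by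
    have h1 : walkLen ℓ c' = walkLen ℓ c := by
      unfold walkLen
      exact (hperm.map ℓ).sum_eq
    rw [← h1, ← hspec, walkLen_append]
  refine ⟨A₁, A₂, hA₁path, hA₂path, ?_, hdisj, hlen, ?_, ?_⟩
  · intro e
    rw [← hperm.mem_iff, hedges, List.mem_append]
  · intro x hx
    have : x ∈ c'.support := by
      rw [hsupp]; exact List.mem_append_left _ hx
    exact mem_support_of_rotate ha this
  · intro x hx
    have : x ∈ c'.support := by
      rw [hsupp, A₂.support_eq_cons] at *
      rcases List.mem_cons.mp hx with rfl | h
      · exact List.mem_append_left _ (by rw [hA₁cons]; exact List.mem_cons_of_mem _ hbA₁)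
      · exact List.mem_append_right _ h
    exact mem_support_of_rotate ha this


/-- any path between `a` and `b` inside the cycle has the length of one of the two arcs -/
theorem inC_path_len {v a b : V} {c : G.Walk v v} (hc : c.IsCycle) (ℓ : Sym2 V → ℝ)
    {A₁ : G.Walk a b} {A₂ : G.Walk b a}
    (hA₁ : A₁.IsPath) (hA₂ : A₂.IsPath)
    (hmem : ∀ e, e ∈ c.edges ↔ (e ∈ A₁.edges ∨ e ∈ A₂.edges))
    (hdisj : ∀ e, e ∈ A₁.edges → e ∉ A₂.edges)
    {r : G.Walk a b} (hr : r.IsPath) (hrC : ∀ e ∈ r.edges, e ∈ c.edges) :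
    walkLen ℓ r = walkLen ℓ A₁ ∨ walkLen ℓ r = walkLen ℓ A₂ := by
  set F := symmDiff r.edges.toFinset A₁.edges.toFinset with hFdef
  have hFsub : F ⊆ c.edges.toFinset := by
    intro e he
    rcases Finset.mem_symmDiff.mp he with ⟨h1, -⟩ | ⟨h1, -⟩
    · exact List.mem_toFinset.mpr (hrC e (List.mem_toFinset.mp h1))
    · exact List.mem_toFinset.mpr ((hmem e).mpr (Or.inl (List.mem_toFinset.mp h1)))
  have hFdeg : ∀ x, degZ F x = 0 := by
    intro x
    rw [hFdef, degZ_symmDiff, degZ_path r hr, degZ_path A₁ hA₁]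
    exact CharTwo.add_self_eq_zero _
  rcases cycle_parity hc F hFsub hFdeg with h | h
  · left
    have : r.edges.toFinset = A₁.edges.toFinset := by
      have := symmDiff_eq_bot.mp (by rw [← hFdef]; exact h)
      exact this
    rw [walkLen_eq_fsum ℓ r hr.isTrail.edges_nodup,
      walkLen_eq_fsum ℓ A₁ hA₁.isTrail.edges_nodup, this]
  · right
    have hEq : r.edges.toFinset = A₂.edges.toFinset := by
      ext e
      have h1 := Finset.ext_iff.mp h e
      rw [hFdef, Finset.mem_symmDiff] at h1
      simp only [List.mem_toFinset] at h1 ⊢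
      have h2 : e ∈ c.edges ↔ (e ∈ A₁.edges ∨ e ∈ A₂.edges) := hmem e
      have h3 := hdisj e
      have h4 : e ∈ r.edges → e ∈ c.edges := hrC e
      by_cases hP : e ∈ A₁.edges
      · constructor
        · intro hR; exact absurd (h2.mpr (Or.inl hP)) (by tauto)
        · intro hQ; exact absurd hQ (h3 hP)
      · constructor
        · intro hR
          rcases h2.mp (h4 hR) with h5 | h5
          · exact absurd h5 hP
          · exact h5
        · intro hQ
          have h5 : e ∈ c.edges := h2.mpr (Or.inr hQ)
          tauto
    rw [walkLen_eq_fsum ℓ r hr.isTrail.edges_nodup,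
      walkLen_eq_fsum ℓ A₂ hA₂.isTrail.edges_nodup, hEq]

/-- replace a walk by a path of no greater length. -/
theorem exists_path_le {ℓ : Sym2 V → ℝ} (hℓpos : ∀ e ∈ G.edgeSet, 0 < ℓ e) {a b : V}
    (w : G.Walk a b) :
    ∃ p : G.Walk a b, p.IsPath ∧ (∀ e ∈ p.edges, e ∈ w.edges) ∧
      walkLen ℓ p ≤ walkLen ℓ w := by
  refine ⟨w.bypass, w.bypass_isPath, fun e he => w.edges_bypass_subset he, ?_⟩
  have hnodup : w.bypass.edges.Nodup := w.bypass_isPath.isTrail.edges_nodup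
  obtain ⟨l, hperm, hsub⟩ := hnodup.subperm w.edges_bypass_subset
  have h1 : walkLen ℓ w.bypass = (l.map ℓ).sum := by
    rw [walkLen]
    exact (hperm.symm.map ℓ).sum_eq
  rw [h1, walkLen]
  apply List.Sublist.sum_le_sum (hsub.map ℓ)
  intro x hx
  rcases List.mem_map.mp hx with ⟨e, he, rfl⟩
  exact (hℓpos e (w.edges_subset_edgeSet he)).le


/-- a path strictly shorter than every path between its endpoints inside `c` -/
def Violating (c : G.Walk v v) (ℓ : Sym2 V → ℝ) {a b : V} (q : G.Walk a b) : Prop :=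
  q.IsPath ∧ ∀ r : G.Walk a b, r.IsPath → (∀ e ∈ r.edges, e ∈ c.edges) →
    walkLen ℓ q < walkLen ℓ r

theorem backward_dir {ℓ : Sym2 V → ℝ} (hℓpos : ∀ e ∈ G.edgeSet, 0 < ℓ e) {v : V}
    {c : G.Walk v v} (hc : c.IsCycle) (hng : ¬IsGeodesic ℓ c) :
    ∃ (v₁ v₂ : V) (d₁ : G.Walk v₁ v₁) (d₂ : G.Walk v₂ v₂),
      d₁.IsCycle ∧ d₂.IsCycle ∧
      walkLen ℓ d₁ < walkLen ℓ c ∧ walkLen ℓ d₂ < walkLen ℓ c ∧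
      ∀ e : Sym2 V, e ∈ c.edges ↔ Xor' (e ∈ d₁.edges) (e ∈ d₂.edges) := by
  classical
  rw [IsGeodesic] at hng
  push_neg at hng
  obtain ⟨a₀, ha₀, b₀, hb₀, hbad⟩ := hng
  -- the violating predicate is satisfiable
  have hPex : ∃ n, ∃ (a b : V) (q : G.Walk a b),
      a ∈ c.support ∧ b ∈ c.support ∧ Violating c ℓ q ∧ q.length = n := by
    by_cases hab : a₀ = b₀
    · subst hab
      obtain ⟨q, hq, hlt⟩ := hbad Walk.nil Walk.IsPath.nil (by simp)
      rw [walkLen_nil] at hlt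
      exact absurd hlt (not_lt.mpr (walkLen_nonneg hℓpos q))
    · obtain ⟨A₁, A₂, hA₁, hA₂, hmem, hdisj, hlen, -, -⟩ :=
        arcs_exist hc ha₀ hb₀ hab ℓ
      have hA₁C : ∀ e ∈ A₁.edges, e ∈ c.edges := fun e he => (hmem e).mpr (Or.inl he)
      have hA₂C : ∀ e ∈ A₂.reverse.edges, e ∈ c.edges := fun e he =>
        (hmem e).mpr (Or.inr ((Walk.edges_reverse A₂ ▸ he : e ∈ A₂.edges.reverse) |>
          List.mem_reverse.mp))
      have key : ∀ (p₀ : G.Walk a₀ b₀), p₀.IsPath → (∀ e ∈ p₀.edges, e ∈ c.edges) →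
          (walkLen ℓ p₀ ≤ walkLen ℓ A₁) → (walkLen ℓ p₀ ≤ walkLen ℓ A₂) →
          ∃ n, ∃ (a b : V) (q : G.Walk a b),
            a ∈ c.support ∧ b ∈ c.support ∧ Violating c ℓ q ∧ q.length = n := by
        intro p₀ hp₀ hp₀C hle1 hle2
        obtain ⟨q, hq, hlt⟩ := hbad p₀ hp₀ hp₀C
        refine ⟨q.length, a₀, b₀, q, ha₀, hb₀, ⟨hq, ?_⟩, rfl⟩
        intro r hr hrC
        rcases inC_path_len hc ℓ hA₁ hA₂ hmem hdisj hr hrC with h | h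
        · rw [h]; exact lt_of_lt_of_le hlt hle1
        · rw [h]; exact lt_of_lt_of_le hlt hle2
      rcases le_total (walkLen ℓ A₁) (walkLen ℓ A₂) with hle | hle
      · exact key A₁ hA₁ hA₁C le_rfl hle
      · refine key A₂.reverse hA₂.reverse hA₂C ?_ ?_
        · rw [walkLen_reverse]; exact hle
        · rw [walkLen_reverse]
  set n₀ := Nat.find hPex with hn₀def
  obtain ⟨a, b, q, ha, hb, hviol, hlenq⟩ := Nat.find_spec hPex
  have hmin : ∀ (a' b' : V) (q' : G.Walk a' b'), a' ∈ c.support → b' ∈ c.support →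
      q'.length < n₀ → q'.IsPath →
      ∃ r : G.Walk a' b', r.IsPath ∧ (∀ e ∈ r.edges, e ∈ c.edges) ∧
        walkLen ℓ r ≤ walkLen ℓ q' := by
    intro a' b' q' ha' hb' hlt hq'
    by_contra hcon
    push_neg at hcon
    have hP : ∃ (a'' b'' : V) (q'' : G.Walk a'' b''),
        a'' ∈ c.support ∧ b'' ∈ c.support ∧ Violating c ℓ q'' ∧ q''.length = q'.length :=
      ⟨a', b', q', ha', hb', ⟨hq', fun r hr hrC => hcon r hr hrC⟩, rfl⟩
    have := Nat.find_min' hPex hP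
    omega
  have hq : q.IsPath := hviol.1
  -- a ≠ b
  have hab : a ≠ b := by
    rintro rfl
    have := hviol.2 Walk.nil Walk.IsPath.nil (by simp)
    rw [walkLen_nil] at this
    exact absurd this (not_lt.mpr (walkLen_nonneg hℓpos q))
  -- internal vertices of q are off c
  have hinternal : ∀ x ∈ q.support, x ≠ a → x ≠ b → x ∉ c.support := by
    intro x hxq hxa hxb hxc
    set q₁ := q.takeUntil x hxq with hq₁def
    set q₂ := q.dropUntil x hxq with hq₂def
    have hspec : q₁.append q₂ = q := q.take_spec hxq
    have hq₁ : q₁.IsPath := hq.takeUntil hxq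
    have hq₂ : q₂.IsPath := hq.dropUntil hxq
    have hlensum : q₁.length + q₂.length = q.length := by
      rw [← hspec, Walk.length_append]
    have hq₁nil : q₁.length ≠ 0 := fun h =>
      hxa (Walk.nil_iff_length_eq.mpr h).eq.symm
    have hq₂nil : q₂.length ≠ 0 := fun h => hxb (Walk.nil_iff_length_eq.mpr h).eq
    obtain ⟨r₁, hr₁, hr₁C, hler₁⟩ := hmin a x q₁ ha hxc (by omega) hq₁
    obtain ⟨r₂, hr₂, hr₂C, hler₂⟩ := hmin x b q₂ hxc hb (by omega) hq₂
    obtain ⟨p', hp', hp'sub, hp'le⟩ := exists_path_le hℓpos (r₁.append r₂)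
    have hp'C : ∀ e ∈ p'.edges, e ∈ c.edges := by
      intro e he
      have := hp'sub e he
      rw [Walk.edges_append, List.mem_append] at this
      rcases this with h | h
      · exact hr₁C e h
      · exact hr₂C e h
    have h1 := hviol.2 p' hp' hp'C
    have h2 : walkLen ℓ (r₁.append r₂) = walkLen ℓ r₁ + walkLen ℓ r₂ :=
      walkLen_append ℓ r₁ r₂
    have h3 : walkLen ℓ q = walkLen ℓ q₁ + walkLen ℓ q₂ := by
      rw [← hspec, walkLen_append]
    linarith
  -- edges of q are off c
  have hqoff : ∀ e ∈ q.edges, e ∉ c.edges := by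
    intro e heq hec
    induction e with
    | h y z =>
      have hyz : G.Adj y z := q.adj_of_mem_edges heq
      have hy : y ∈ q.support := q.fst_mem_support_of_mem_edges heq
      have hz : z ∈ q.support := q.snd_mem_support_of_mem_edges heq
      have hyc : y ∈ c.support := c.fst_mem_support_of_mem_edges hec
      have hzc : z ∈ c.support := c.snd_mem_support_of_mem_edges hec
      have hy' : y = a ∨ y = b := by
        by_contra hcon
        push_neg at hcon
        exact hinternal y hy hcon.1 hcon.2 hyc
      have hz' : z = a ∨ z = b := by
        by_contra hcon
        push_neg at hcon
        exact hinternal z hz hcon.1 hcon.2 hzc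
      have heab : s(y, z) = s(a, b) := by
        rcases hy' with rfl | rfl <;> rcases hz' with rfl | rfl
        · exact absurd rfl hyz.ne
        · rfl
        · exact Sym2.eq_swap
        · exact absurd rfl hyz.ne
      have hadj : G.Adj a b := by
        have h0 : s(y, z) ∈ G.edgeSet := hyz
        rw [heab] at h0
        exact h0
      have hr : (Walk.cons hadj Walk.nil : G.Walk a b).IsPath := by
        rw [Walk.isPath_def]
        simp [hab]
      have hrC : ∀ e' ∈ (Walk.cons hadj Walk.nil : G.Walk a b).edges, e' ∈ c.edges := by
        intro e' he'
        simp only [Walk.edges_cons, Walk.edges_nil, List.mem_singleton] at he'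
        rw [he', ← heab]
        exact hec
      have h1 := hviol.2 _ hr hrC
      have h2 : walkLen ℓ (Walk.cons hadj Walk.nil : G.Walk a b) = ℓ (s(a, b)) := by
        simp [walkLen]
      have h3 : ℓ (s(y, z)) ≤ walkLen ℓ q := le_walkLen_of_mem hℓpos q heq
      rw [heab] at h3
      linarith
  -- arcs at (a, b)
  obtain ⟨A₁, A₂, hA₁, hA₂, hmem, hdisj, hlen, hA₁supp, hA₂supp⟩ := arcs_exist hc ha hb hab ℓ
  have hqA₁ : walkLen ℓ q < walkLen ℓ A₁ :=
    hviol.2 A₁ hA₁ (fun e he => (hmem e).mpr (Or.inl he))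
  have hqA₂ : walkLen ℓ q < walkLen ℓ A₂ := by
    have := hviol.2 A₂.reverse hA₂.reverse (fun e he => (hmem e).mpr (Or.inr (by
      rw [Walk.edges_reverse, List.mem_reverse] at he
      exact he)))
    rwa [walkLen_reverse] at this
  -- construct the two cycles
  refine ⟨a, a, A₁.append q.reverse, q.append A₂, ?_, ?_, ?_, ?_, ?_⟩
  · -- d₁ is a cycle
    constructor
    constructor
    · rw [Walk.isTrail_def, Walk.edges_append, Walk.edges_reverse]
      refine List.nodup_append'.mpr ⟨hA₁.isTrail.edges_nodup, List.nodup_reverse.mpr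
        hq.isTrail.edges_nodup, ?_⟩
      intro e he₁ he₂
      rw [List.mem_reverse] at he₂
      exact hqoff e he₂ ((hmem e).mpr (Or.inl he₁))
    · intro h
      have h0 := congrArg Walk.length h
      rw [Walk.length_append] at h0
      simp only [Walk.length_nil] at h0
      have hz : A₁.length = 0 := by omega
      exact (not_nil_of_ne hab) ((Walk.nil_iff_length_eq (p := A₁)).mpr hz)
    · rw [Walk.support_append, A₁.support_eq_cons, List.cons_append, List.tail_cons]
      have h1 : A₁.support.tail.Nodup := (hA₁.support_nodup).tail
      have h2 : q.reverse.support.tail.Nodup := (hq.reverse.support_nodup).tail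
      refine List.nodup_append'.mpr ⟨h1, h2, ?_⟩
      intro x hx₁ hx₂
      have hxb : x ≠ b := by
        have hnd := hq.reverse.support_nodup
        rw [q.reverse.support_eq_cons] at hnd
        rintro rfl
        exact (List.nodup_cons.mp hnd).1 hx₂
      have hxq : x ∈ q.support := by
        have : x ∈ q.reverse.support := by
          rw [q.reverse.support_eq_cons]
          exact List.mem_cons_of_mem _ hx₂
        rwa [Walk.support_reverse, List.mem_reverse] at this
      have hxa : x ≠ a := by
        have hnd := hA₁.support_nodup
        rw [A₁.support_eq_cons] at hnd
        rintro rfl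
        exact (List.nodup_cons.mp hnd).1 hx₁
      have hxc : x ∈ c.support := hA₁supp x (by
        rw [A₁.support_eq_cons]; exact List.mem_cons_of_mem _ hx₁)
      exact hinternal x hxq hxa hxb hxc
  · -- d₂ is a cycle
    constructor
    constructor
    · rw [Walk.isTrail_def, Walk.edges_append]
      refine List.nodup_append'.mpr ⟨hq.isTrail.edges_nodup, hA₂.isTrail.edges_nodup, ?_⟩
      intro e he₁ he₂
      exact hqoff e he₁ ((hmem e).mpr (Or.inr he₂))
    · intro h
      have h0 := congrArg Walk.length h
      rw [Walk.length_append] at h0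
      simp only [Walk.length_nil] at h0
      have hz : q.length = 0 := by omega
      exact (not_nil_of_ne hab) ((Walk.nil_iff_length_eq (p := q)).mpr hz)
    · rw [Walk.support_append, q.support_eq_cons, List.cons_append, List.tail_cons]
      have h1 : q.support.tail.Nodup := (hq.support_nodup).tail
      have h2 : A₂.support.tail.Nodup := (hA₂.support_nodup).tail
      refine List.nodup_append'.mpr ⟨h1, h2, ?_⟩
      intro x hx₁ hx₂
      have hxa : x ≠ a := by
        have hnd := hq.support_nodup
        rw [q.support_eq_cons] at hnd
        rintro rfl
        exact (List.nodup_cons.mp hnd).1 hx₁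
      have hxb : x ≠ b := by
        have hnd := hA₂.support_nodup
        rw [A₂.support_eq_cons] at hnd
        rintro rfl
        exact (List.nodup_cons.mp hnd).1 hx₂
      have hxq : x ∈ q.support := by
        rw [q.support_eq_cons]; exact List.mem_cons_of_mem _ hx₁
      have hxc : x ∈ c.support := hA₂supp x (by
        rw [A₂.support_eq_cons]; exact List.mem_cons_of_mem _ hx₂)
      exact hinternal x hxq hxa hxb hxc
  · rw [walkLen_append, walkLen_reverse, hlen]
    linarith
  · rw [walkLen_append, hlen]
    linarith
  · intro e
    have hd₁ : e ∈ (A₁.append q.reverse).edges ↔ (e ∈ A₁.edges ∨ e ∈ q.edges) := by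
      rw [Walk.edges_append, List.mem_append, Walk.edges_reverse, List.mem_reverse]
    have hd₂ : e ∈ (q.append A₂).edges ↔ (e ∈ q.edges ∨ e ∈ A₂.edges) := by
      rw [Walk.edges_append, List.mem_append]
    rw [hd₁, hd₂, Xor']
    have h1 := hmem e
    have h2 := hdisj e
    have h3 := hqoff e
    constructor
    · intro hec
      rcases h1.mp hec with hA | hB
      · left
        refine ⟨Or.inl hA, ?_⟩
        rintro (hq' | hB)
        · exact h3 hq' hec
        · exact h2 hA hB
      · right
        refine ⟨Or.inr hB, ?_⟩
        rintro (hA | hq')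
        · exact h2 hA hB
        · exact h3 hq' hec
    · rintro (⟨hA | hq', hn⟩ | ⟨hq' | hB, hn⟩)
      · exact h1.mpr (Or.inl hA)
      · exact absurd (Or.inl hq') hn
      · exact absurd (Or.inr hq') hn
      · exact h1.mpr (Or.inr hB)


/-- Rotate a cycle so that a designated edge comes first. -/
theorem cycle_first_edge (ℓ : Sym2 V → ℝ) :
    ∀ (n : ℕ) {w : V} (d : G.Walk w w), d.IsCycle → ∀ {e₀ : Sym2 V}, e₀ ∈ d.edges →
    d.edges.idxOf e₀ ≤ n →
    ∃ (x x' : V) (h : G.Adj x x') (W : G.Walk x' x),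
      (Walk.cons h W).IsCycle ∧ s(x, x') = e₀ ∧
      (∀ e, e ∈ (Walk.cons h W).edges ↔ e ∈ d.edges) ∧
      walkLen ℓ (Walk.cons h W) = walkLen ℓ d := by
  intro n
  induction n with
  | zero =>
    intro w d hd e₀ he hidx
    cases d with
    | nil => exact absurd rfl hd.ne_nil
    | @cons _ w₁ _ h rest =>
      have : e₀ = s(w, w₁) := by
        rw [Walk.edges_cons] at he hidx
        by_contra hne
        rw [List.idxOf_cons_ne _ (fun hh => hne hh.symm)] at hidx
        omega
      subst this
      exact ⟨w, w₁, h, rest, hd, rfl, fun e => Iff.rfl, rfl⟩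
  | succ n ih =>
    intro w d hd e₀ he hidx
    cases d with
    | nil => exact absurd rfl hd.ne_nil
    | @cons _ w₁ _ h rest =>
      by_cases hfirst : e₀ = s(w, w₁)
      · subst hfirst
        exact ⟨w, w₁, h, rest, hd, rfl, fun e => Iff.rfl, rfl⟩
      · -- rotate by one
        have he' : e₀ ∈ rest.edges := by
          rw [Walk.edges_cons] at he
          rcases List.mem_cons.mp he with h1 | h1
          · exact absurd h1 hfirst
          · exact h1
        have hw₁w : w₁ ≠ w := fun hh => (G.ne_of_adj h) hh.symm
        have hrestnil : ¬rest.Nil := not_nil_of_ne hw₁w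
        set d₂ := rest.append (Walk.cons h Walk.nil) with hd₂def
        have hrestsupp : rest.support.Nodup := by
          have := hd.support_nodup
          rwa [Walk.support_cons, List.tail_cons] at this
        have hedges : d₂.edges = rest.edges ++ [s(w, w₁)] := by
          rw [hd₂def, Walk.edges_append, Walk.edges_cons, Walk.edges_nil]
        have hdedges : (Walk.cons h rest).edges = s(w, w₁) :: rest.edges := Walk.edges_cons h rest
        have hnodup : (s(w, w₁) :: rest.edges).Nodup := by
          rw [← hdedges]; exact hd.isTrail.edges_nodup
        have hd₂cyc : d₂.IsCycle := by
          constructor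
          constructor
          · rw [Walk.isTrail_def, hedges]
            refine List.nodup_append'.mpr ⟨(List.nodup_cons.mp hnodup).2, List.nodup_singleton _, ?_⟩
            intro e he₁ he₂
            rw [List.mem_singleton] at he₂
            subst he₂
            exact (List.nodup_cons.mp hnodup).1 he₁
          · intro hnil
            have := congrArg Walk.length hnil
            rw [hd₂def, Walk.length_append] at this
            simp at this
          · rw [hd₂def, Walk.support_append, Walk.support_cons, Walk.support_nil,
              List.tail_cons, rest.support_eq_cons, List.cons_append, List.tail_cons]
            rw [rest.support_eq_cons] at hrestsupp
            refine List.nodup_append'.mpr ⟨(List.nodup_cons.mp hrestsupp).2,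
              List.nodup_singleton _, ?_⟩
            intro x hx₁ hx₂
            rw [List.mem_singleton] at hx₂
            subst hx₂
            exact (List.nodup_cons.mp hrestsupp).1 hx₁
        have hidx₂ : d₂.edges.idxOf e₀ ≤ n := by
          rw [hedges, List.idxOf_append_of_mem he']
          rw [hdedges, List.idxOf_cons_ne _ (fun hh => hfirst hh.symm)] at hidx
          omega
        have he₂ : e₀ ∈ d₂.edges := by
          rw [hedges]; exact List.mem_append_left _ he'
        obtain ⟨x, x', hadj, W, hcyc, hex, hmem, hlen⟩ := ih d₂ hd₂cyc he₂ hidx₂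
        refine ⟨x, x', hadj, W, hcyc, hex, ?_, ?_⟩
        · intro e
          rw [hmem e, hedges, hdedges, List.mem_append, List.mem_singleton, List.mem_cons]
          tauto
        · rw [hlen, walkLen, walkLen, hedges, hdedges, List.map_append, List.sum_append]
          simp [add_comm]


theorem zlem (ip iz iu' iu : ZMod 2) : (ip + iz) + (iu' + ip) + (iu + iu') = iu + iz := by
  have h1 : ip + ip = 0 := CharTwo.add_self_eq_zero ip
  have h2 : iu' + iu' = 0 := CharTwo.add_self_eq_zero iu'
  linear_combination h1 + h2

theorem symm_step {α : Type} [DecidableEq α] (e₀ : α) (FW X A : Finset α) (h₀ : e₀ ∉ FW) :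
    symmDiff (insert e₀ FW) (symmDiff (symmDiff X A) {e₀}) = symmDiff (symmDiff FW X) A := by
  ext e
  by_cases hee : e = e₀
  · subst hee
    by_cases hQ : e ∈ X <;> by_cases hR : e ∈ A <;>
      simp [Finset.mem_symmDiff, h₀, hQ, hR]
  · by_cases hP : e ∈ FW <;> by_cases hQ : e ∈ X <;> by_cases hR : e ∈ A <;>
      simp [Finset.mem_symmDiff, hee, hP, hQ, hR]

theorem if_mem_edge {u u' x : V} (hne : u ≠ u') :
    (if x ∈ s(u, u') then (1 : ZMod 2) else 0) =
      (if x = u then 1 else 0) + (if x = u' then 1 else 0) := by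
  by_cases h1 : x = u
  · subst h1
    have h2 : x ≠ u' := hne
    simp [Sym2.mem_iff, h2]
  · by_cases h2 : x = u'
    · subst h2
      simp [Sym2.mem_iff, h1, Ne.symm (fun hh => h1 hh)]
    · simp [Sym2.mem_iff, h1, h2]

theorem chord_replace {ℓ : Sym2 V → ℝ} (hℓpos : ∀ e ∈ G.edgeSet, 0 < ℓ e) {v : V}
    {c : G.Walk v v} (hgeo : IsGeodesic ℓ c) :
    ∀ {u z : V} (W : G.Walk u z), W.IsPath → z ∈ c.support →
    ∃ (p : V) (Y : G.Walk u p) (X AU : Finset (Sym2 V)),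
      p ∈ c.support ∧ Y.IsPath ∧ (∀ x ∈ Y.support, x ∈ W.support) ∧
      X ⊆ c.edges.toFinset ∧ AU ⊆ c.edges.toFinset ∧
      fsum ℓ AU + walkLen ℓ Y ≤
        fsum ℓ (W.edges.toFinset.filter (fun e => e ∉ c.edges)) ∧
      symmDiff (W.edges.toFinset.filter (fun e => e ∈ c.edges)) X ⊆ AU ∧
      (∀ x, degZ X x = (if x = p then 1 else 0) + (if x = z then 1 else 0)) := by
  intro u z W
  induction W with
  | nil =>
    rename_i u₀
    intro hW hz
    refine ⟨u₀, Walk.nil, ∅, ∅, hz, Walk.IsPath.nil, fun x hx => hx, Finset.empty_subset _,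
      Finset.empty_subset _, ?_, ?_, ?_⟩
    · simp [fsum, walkLen]
    · simp
    · intro x
      rw [degZ_empty]
      by_cases h : x = u₀ <;> simp [h] <;> decide
  | @cons u u' z h W' ih =>
    intro hW hz
    have hW' : W'.IsPath := hW.of_cons
    have hu : u ∉ W'.support := ((Walk.cons_isPath_iff h W').mp hW).2
    obtain ⟨p, Y, X, AU, hp, hY, hYsupp, hXsub, hAUsub, hineq, hsymm, hdeg⟩ := ih hW' hz
    have he₀new : s(u, u') ∉ W'.edges := fun hmem =>
      hu (W'.fst_mem_support_of_mem_edges hmem)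
    have hWedges : (Walk.cons h W').edges.toFinset = insert s(u, u') W'.edges.toFinset := by
      rw [Walk.edges_cons, List.toFinset_cons]
    by_cases hC : s(u, u') ∈ c.edges
    · -- close the pending chord
      have hu'c : u' ∈ c.support := c.snd_mem_support_of_mem_edges hC
      have huc : u ∈ c.support := c.fst_mem_support_of_mem_edges hC
      obtain ⟨g, hg, hgC, hgmin⟩ := hgeo u' hu'c p hp
      have hgle : walkLen ℓ g ≤ walkLen ℓ Y := hgmin Y hY
      set A := g.edges.toFinset with hAdef
      have hgsum : fsum ℓ A = walkLen ℓ g :=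
        (walkLen_eq_fsum ℓ g hg.isTrail.edges_nodup).symm
      have hAsub : A ⊆ c.edges.toFinset := fun e he =>
        List.mem_toFinset.mpr (hgC e (List.mem_toFinset.mp he))
      have he₀EC : s(u, u') ∈ c.edges.toFinset := List.mem_toFinset.mpr hC
      refine ⟨u, Walk.nil, symmDiff (symmDiff X A) {s(u, u')}, AU ∪ A, huc,
        Walk.IsPath.nil, ?_, ?_, ?_, ?_, ?_, ?_⟩
      · intro x hx
        simp only [Walk.support_nil, List.mem_singleton] at hx
        rw [hx]
        exact Walk.start_mem_support _
      · intro e he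
        rcases Finset.mem_symmDiff.mp he with ⟨h1, -⟩ | ⟨h1, -⟩
        · rcases Finset.mem_symmDiff.mp h1 with ⟨h2, -⟩ | ⟨h2, -⟩
          · exact hXsub h2
          · exact hAsub h2
        · rw [Finset.mem_singleton] at h1
          rw [h1]
          exact he₀EC
      · exact Finset.union_subset hAUsub hAsub
      · rw [walkLen_nil, add_zero]
        have hSWn : (Walk.cons h W').edges.toFinset.filter (fun e => e ∉ c.edges)
            = W'.edges.toFinset.filter (fun e => e ∉ c.edges) := by
          rw [hWedges, Finset.filter_insert, if_neg (by simp [hC])]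
        rw [hSWn]
        have hnonneg : ∀ e ∈ AU ∪ A, 0 ≤ ℓ e := by
          intro e he
          have : e ∈ c.edges.toFinset := (Finset.union_subset hAUsub hAsub) he
          exact (hℓpos e (c.edges_subset_edgeSet (List.mem_toFinset.mp this))).le
        have h1 : fsum ℓ (AU ∪ A) ≤ fsum ℓ AU + fsum ℓ A := fsum_union_le hnonneg
        have hYnonneg : 0 ≤ walkLen ℓ Y := walkLen_nonneg hℓpos Y
        linarith
      · -- symmDiff condition
        have hFWn : (Walk.cons h W').edges.toFinset.filter (fun e => e ∈ c.edges)
            = insert s(u, u') (W'.edges.toFinset.filter (fun e => e ∈ c.edges)) := by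
          rw [hWedges, Finset.filter_insert, if_pos hC]
        have he₀FW : s(u, u') ∉ W'.edges.toFinset.filter (fun e => e ∈ c.edges) := by
          intro hmem
          exact he₀new (List.mem_toFinset.mp (Finset.mem_filter.mp hmem).1)
        rw [hFWn, symm_step _ _ _ _ he₀FW]
        intro e heq
        rcases Finset.mem_symmDiff.mp heq with ⟨h1, -⟩ | ⟨h1, -⟩
        · exact Finset.mem_union_left _ (hsymm h1)
        · exact Finset.mem_union_right _ h1
      · intro x
        rw [degZ_symmDiff, degZ_symmDiff, hdeg x, hAdef, degZ_path g hg, degZ_singleton,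
          if_mem_edge (G.ne_of_adj h)]
        exact zlem _ _ _ _
    · -- extend the pending chord
      have hunotY : u ∉ Y.support := fun hmem => hu (hYsupp u hmem)
      refine ⟨p, Walk.cons h Y, X, AU, hp, hY.cons hunotY, ?_, hXsub, hAUsub, ?_, ?_, hdeg⟩
      · intro x hx
        rw [Walk.support_cons] at hx ⊢
        rcases List.mem_cons.mp hx with rfl | hx'
        · exact List.mem_cons_self
        · exact List.mem_cons_of_mem _ (hYsupp x hx')
      · have hSWn : (Walk.cons h W').edges.toFinset.filter (fun e => e ∉ c.edges)
            = insert s(u, u') (W'.edges.toFinset.filter (fun e => e ∉ c.edges)) := by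
          rw [hWedges, Finset.filter_insert, if_pos hC]
        have he₀SW : s(u, u') ∉ W'.edges.toFinset.filter (fun e => e ∉ c.edges) := by
          intro hmem
          exact he₀new (List.mem_toFinset.mp (Finset.mem_filter.mp hmem).1)
        rw [hSWn, walkLen_cons]
        simp only [fsum] at hineq ⊢
        rw [Finset.sum_insert he₀SW]
        linarith
      · have hFWn : (Walk.cons h W').edges.toFinset.filter (fun e => e ∈ c.edges)
            = W'.edges.toFinset.filter (fun e => e ∈ c.edges) := by
          rw [hWedges, Finset.filter_insert, if_neg (by simp [hC])]
        rw [hFWn]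
        exact hsymm


theorem zlem0 (a b c : ZMod 2) : (a + b) + (c + a) + (b + c) = 0 := by
  have h1 := CharTwo.add_self_eq_zero a
  have h2 := CharTwo.add_self_eq_zero b
  have h3 := CharTwo.add_self_eq_zero c
  linear_combination h1 + h2 + h3

theorem forward_dir {ℓ : Sym2 V → ℝ} (hℓpos : ∀ e ∈ G.edgeSet, 0 < ℓ e) {v : V}
    {c : G.Walk v v} (hc : c.IsCycle) (hgeo : IsGeodesic ℓ c)
    {v₁ v₂ : V} {d₁ : G.Walk v₁ v₁} {d₂ : G.Walk v₂ v₂}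
    (h₁ : d₁.IsCycle) (h₂ : d₂.IsCycle)
    (hxor : ∀ e : Sym2 V, e ∈ c.edges ↔ Xor' (e ∈ d₁.edges) (e ∈ d₂.edges))
    (hlt₁ : walkLen ℓ d₁ < walkLen ℓ c) (hlt₂ : walkLen ℓ d₂ < walkLen ℓ c) : False := by
  classical
  set EC := c.edges.toFinset with hECdef
  set E₁ := d₁.edges.toFinset with hE₁def
  set E₂ := d₂.edges.toFinset with hE₂def
  set F₁ := E₁ ∩ EC with hF₁def
  set F₂ := E₂ ∩ EC with hF₂def
  set S₁ := E₁ \ EC with hS₁def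
  set S₂ := E₂ \ EC with hS₂def
  have fboth : ∀ e, e ∈ d₁.edges → e ∈ d₂.edges → e ∉ c.edges := by
    intro e he1 he2 hec
    rcases (hxor e).mp hec with ⟨-, hn⟩ | ⟨-, hn⟩
    · exact hn he2
    · exact hn he1
  have fd₁ : ∀ e, e ∈ d₁.edges → e ∉ c.edges → e ∈ d₂.edges := by
    intro e he1 hec
    by_contra hn
    exact hec ((hxor e).mpr (Or.inl ⟨he1, hn⟩))
  have fd₂ : ∀ e, e ∈ d₂.edges → e ∉ c.edges → e ∈ d₁.edges := by
    intro e he2 hec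
    by_contra hn
    exact hec ((hxor e).mpr (Or.inr ⟨he2, hn⟩))
  have fc : ∀ e, e ∈ c.edges → (e ∈ d₁.edges ∨ e ∈ d₂.edges) := by
    intro e hec
    rcases (hxor e).mp hec with ⟨h1, -⟩ | ⟨h1, -⟩
    · exact Or.inl h1
    · exact Or.inr h1
  have hposEC : ∀ e ∈ EC, 0 ≤ ℓ e := fun e he =>
    (hℓpos e (c.edges_subset_edgeSet (List.mem_toFinset.mp he))).le
  have hposE₁ : ∀ e ∈ E₁, 0 ≤ ℓ e := fun e he =>
    (hℓpos e (d₁.edges_subset_edgeSet (List.mem_toFinset.mp he))).le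
  have hposE₂ : ∀ e ∈ E₂, 0 ≤ ℓ e := fun e he =>
    (hℓpos e (d₂.edges_subset_edgeSet (List.mem_toFinset.mp he))).le
  -- sum decompositions
  have hwc : walkLen ℓ c = fsum ℓ EC := walkLen_eq_fsum ℓ c hc.isTrail.edges_nodup
  have hwd₁ : walkLen ℓ d₁ = fsum ℓ E₁ := walkLen_eq_fsum ℓ d₁ h₁.isTrail.edges_nodup
  have hwd₂ : walkLen ℓ d₂ = fsum ℓ E₂ := walkLen_eq_fsum ℓ d₂ h₂.isTrail.edges_nodup
  have hun₁ : F₁ ∪ S₁ = E₁ := by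
    ext e
    simp only [Finset.mem_union, Finset.mem_inter, Finset.mem_sdiff, hF₁def, hS₁def]
    tauto
  have hdj₁ : Disjoint F₁ S₁ := by
    rw [Finset.disjoint_left]
    intro e hh1 hh2
    exact (Finset.mem_sdiff.mp hh2).2 (Finset.mem_inter.mp hh1).2
  have hun₂ : F₂ ∪ S₂ = E₂ := by
    ext e
    simp only [Finset.mem_union, Finset.mem_inter, Finset.mem_sdiff, hF₂def, hS₂def]
    tauto
  have hdj₂ : Disjoint F₂ S₂ := by
    rw [Finset.disjoint_left]
    intro e hh1 hh2
    exact (Finset.mem_sdiff.mp hh2).2 (Finset.mem_inter.mp hh1).2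
  have hsplit₁ : fsum ℓ E₁ = fsum ℓ F₁ + fsum ℓ S₁ := by
    rw [← hun₁, fsum_disjUnion hdj₁]
  have hsplit₂ : fsum ℓ E₂ = fsum ℓ F₂ + fsum ℓ S₂ := by
    rw [← hun₂, fsum_disjUnion hdj₂]
  have hECunion : EC = F₁ ∪ F₂ := by
    ext e
    simp only [hF₁def, hF₂def, Finset.mem_union, Finset.mem_inter, hE₁def, hE₂def, hECdef,
      List.mem_toFinset]
    constructor
    · intro hec
      rcases fc e hec with h | h
      · exact Or.inl ⟨h, hec⟩
      · exact Or.inr ⟨h, hec⟩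
    · rintro (⟨-, hec⟩ | ⟨-, hec⟩) <;> exact hec
  have hECdisj : Disjoint F₁ F₂ := by
    rw [Finset.disjoint_left]
    intro e he1 he2
    rcases Finset.mem_inter.mp he1 with ⟨ha, hb⟩
    rcases Finset.mem_inter.mp he2 with ⟨ha', -⟩
    exact fboth e (List.mem_toFinset.mp ha) (List.mem_toFinset.mp ha')
      (List.mem_toFinset.mp hb)
  have hECsplit : fsum ℓ EC = fsum ℓ F₁ + fsum ℓ F₂ := by
    rw [hECunion, fsum_disjUnion hECdisj]
  have hSS : S₁ = S₂ := by
    ext e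
    simp only [hS₁def, hS₂def, Finset.mem_sdiff, hE₁def, hE₂def, hECdef, List.mem_toFinset]
    constructor
    · rintro ⟨h1, h2⟩; exact ⟨fd₁ e h1 h2, h2⟩
    · rintro ⟨h1, h2⟩; exact ⟨fd₂ e h1 h2, h2⟩
  have hS₁F₂ : fsum ℓ S₁ < fsum ℓ F₂ := by
    rw [hwd₁, hsplit₁, hwc, hECsplit] at hlt₁
    linarith
  have hS₁F₁ : fsum ℓ S₁ < fsum ℓ F₁ := by
    rw [hwd₂, hsplit₂, hwc, hECsplit, ← hSS] at hlt₂
    linarith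
  have hS₁nonneg : 0 ≤ fsum ℓ S₁ :=
    fsum_nonneg (fun e he => hposE₁ e (Finset.mem_sdiff.mp he).1)
  -- F₁ is nonempty
  rcases Finset.eq_empty_or_nonempty F₁ with hF₁ | hF₁
  · have hzero : fsum ℓ F₁ = 0 := by
      rw [hF₁]
      simp [fsum]
    linarith
  obtain ⟨estar, hestar⟩ := hF₁
  have hestar₁ : estar ∈ d₁.edges := List.mem_toFinset.mp (Finset.mem_inter.mp hestar).1
  have hestarC : estar ∈ c.edges := List.mem_toFinset.mp (Finset.mem_inter.mp hestar).2
  -- rotate d₁ to start with estar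
  obtain ⟨x, x', hadj, W, hcyc, hex, hmemD, hlenD⟩ :=
    cycle_first_edge ℓ d₁.edges.length d₁ h₁ hestar₁ (List.idxOf_le_length)
  have he₀C : s(x, x') ∈ c.edges := hex ▸ hestarC
  have hxc : x ∈ c.support := c.fst_mem_support_of_mem_edges he₀C
  have hx'c : x' ∈ c.support := c.snd_mem_support_of_mem_edges he₀C
  have hWpath : W.IsPath := by
    rw [Walk.isPath_def]
    simpa using hcyc.support_nodup
  obtain ⟨p, Y, X, AU, hp, hY, hYsupp, hXsub, hAUsub, hineq, hsymm, hdeg⟩ :=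
    chord_replace hℓpos hgeo W hWpath hxc
  obtain ⟨g, hg, hgC, hgmin⟩ := hgeo x' hx'c p hp
  have hgle : walkLen ℓ g ≤ walkLen ℓ Y := hgmin Y hY
  set A := g.edges.toFinset with hAdef
  have hgsum : fsum ℓ A = walkLen ℓ g := (walkLen_eq_fsum ℓ g hg.isTrail.edges_nodup).symm
  have hAsub : A ⊆ EC := fun e he => List.mem_toFinset.mpr (hgC e (List.mem_toFinset.mp he))
  set FW := W.edges.toFinset.filter (fun e => e ∈ c.edges) with hFWdef
  set SW := W.edges.toFinset.filter (fun e => e ∉ c.edges) with hSWdef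
  set T := symmDiff (symmDiff X A) {s(x, x')} with hTdef
  have he₀W : s(x, x') ∉ W.edges := by
    have := hcyc.isTrail.edges_nodup
    rw [Walk.edges_cons] at this
    exact (List.nodup_cons.mp this).1
  have he₀FW : s(x, x') ∉ FW := fun hmem =>
    he₀W (List.mem_toFinset.mp (Finset.mem_filter.mp hmem).1)
  -- SW = S₁
  have hSWS₁ : SW = S₁ := by
    ext e
    simp only [hSWdef, hS₁def, Finset.mem_filter, Finset.mem_sdiff, hE₁def, hECdef,
      List.mem_toFinset]
    constructor
    · rintro ⟨h1, h2⟩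
      refine ⟨(hmemD e).mp ?_, h2⟩
      rw [Walk.edges_cons]
      exact List.mem_cons_of_mem _ h1
    · rintro ⟨h1, h2⟩
      have := (hmemD e).mpr h1
      rw [Walk.edges_cons] at this
      rcases List.mem_cons.mp this with rfl | h3
      · exact absurd he₀C h2
      · exact ⟨h3, h2⟩
  -- F₁ = insert e₀ FW
  have hF₁FW : F₁ = insert s(x, x') FW := by
    ext e
    simp only [hF₁def, hFWdef, Finset.mem_inter, Finset.mem_insert, Finset.mem_filter,
      hE₁def, hECdef, List.mem_toFinset]
    constructor
    · rintro ⟨h1, h2⟩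
      have := (hmemD e).mpr h1
      rw [Walk.edges_cons] at this
      rcases List.mem_cons.mp this with rfl | h3
      · exact Or.inl rfl
      · exact Or.inr ⟨h3, h2⟩
    · rintro (rfl | ⟨h1, h2⟩)
      · refine ⟨(hmemD _).mp ?_, he₀C⟩
        rw [Walk.edges_cons]
        exact List.mem_cons_self
      · refine ⟨(hmemD e).mp ?_, h2⟩
        rw [Walk.edges_cons]
        exact List.mem_cons_of_mem _ h1
  -- T is an even subset of EC
  have hTsub : T ⊆ EC := by
    intro e he
    rcases Finset.mem_symmDiff.mp he with ⟨h1, -⟩ | ⟨h1, -⟩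
    · rcases Finset.mem_symmDiff.mp h1 with ⟨h2, -⟩ | ⟨h2, -⟩
      · exact hXsub h2
      · exact hAsub h2
    · rw [Finset.mem_singleton] at h1
      rw [h1]
      exact List.mem_toFinset.mpr he₀C
  have hTdeg : ∀ t, degZ T t = 0 := by
    intro t
    rw [hTdef, degZ_symmDiff, degZ_symmDiff, hdeg t, hAdef, degZ_path g hg, degZ_singleton,
      if_mem_edge (G.ne_of_adj hadj)]
    exact zlem0 _ _ _
  -- the symmetric difference bound
  have hFT : symmDiff F₁ T = symmDiff (symmDiff FW X) A := by
    rw [hF₁FW, hTdef]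
    exact symm_step _ _ _ _ he₀FW
  have hFTsub : symmDiff F₁ T ⊆ AU ∪ A := by
    rw [hFT]
    intro e he
    rcases Finset.mem_symmDiff.mp he with ⟨h1, -⟩ | ⟨h1, -⟩
    · exact Finset.mem_union_left _ (hsymm h1)
    · exact Finset.mem_union_right _ h1
  have hposAUA : ∀ e ∈ AU ∪ A, 0 ≤ ℓ e := by
    intro e he
    rcases Finset.mem_union.mp he with h | h
    · exact hposEC e (hAUsub h)
    · exact hposEC e (hAsub h)
  have hAUA : fsum ℓ (AU ∪ A) ≤ fsum ℓ S₁ := by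
    have h1 : fsum ℓ (AU ∪ A) ≤ fsum ℓ AU + fsum ℓ A := fsum_union_le hposAUA
    rw [← hSWS₁]
    have h2 : walkLen ℓ Y ≥ walkLen ℓ g := hgle
    linarith
  rcases cycle_parity hc T hTsub hTdeg with hT | hT
  · -- T = ∅ : F₁ ⊆ AU ∪ A
    have hF₁sub : F₁ ⊆ AU ∪ A := by
      intro e he
      apply hFTsub
      rw [hT, Finset.mem_symmDiff]
      left
      exact ⟨he, Finset.notMem_empty e⟩
    have := fsum_mono (ℓ := ℓ) hF₁sub hposAUA
    linarith
  · -- T = EC : F₂ ⊆ AU ∪ A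
    have hF₂sub : F₂ ⊆ AU ∪ A := by
      intro e he
      apply hFTsub
      rw [hT, Finset.mem_symmDiff]
      right
      refine ⟨?_, ?_⟩
      · rw [← hECdef, hECunion]
        exact Finset.mem_union_right _ he
      · intro hcon
        exact (Finset.disjoint_left.mp hECdisj) hcon he
    have := fsum_mono (ℓ := ℓ) hF₂sub hposAUA
    linarith

end GeoAux

theorem geodesic_iff_not_sum_of_two_shorter_cycles
    {V : Type} [Fintype V] (G : SimpleGraph V) (ℓ : Sym2 V → ℝ)
    (hℓpos : ∀ e ∈ G.edgeSet, 0 < ℓ e)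
    (v : V) (c : G.Walk v v) (hc : c.IsCycle) :
    IsGeodesic ℓ c ↔
      ¬ ∃ (v₁ v₂ : V) (d₁ : G.Walk v₁ v₁) (d₂ : G.Walk v₂ v₂),
        d₁.IsCycle ∧ d₂.IsCycle ∧
        walkLen ℓ d₁ < walkLen ℓ c ∧ walkLen ℓ d₂ < walkLen ℓ c ∧
        ∀ e : Sym2 V, e ∈ c.edges ↔ Xor' (e ∈ d₁.edges) (e ∈ d₂.edges) := by
  classical
  constructor
  · intro hgeo
    rintro ⟨v₁, v₂, d₁, d₂, h₁, h₂, hlt₁, hlt₂, hxor⟩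
    exact GeoAux.forward_dir hℓpos hc hgeo h₁ h₂ hxor hlt₁ hlt₂
  · intro h
    by_contra hng
    exact h (GeoAux.backward_dir hℓpos hc hng)
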